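/- Let α_{ij} ≥ 0 and suppose (d_1,...,d_K) with all d_i ≥ 0 violates some cycle bound: there is a cyclic sequence of distinct indices (i_0, i_1,...,i_m), i_0 = i_m, m ≥ 2, with d_{i_j} > 0 for all j and ∑_{j=1}^m d_{i_j} > ∑_{j=1}^m (α_{i_j i_j} − α_{i_{j-1} i_j}). Then there are no real numbers r_1,...,r_K ≤ 0 with d_i = α_{ii} + r_i − max{0, max_{k≠i}(α_{ik} + r_k)} for all i in the cycle. -/
import Mathlib


/-- Cyclic predecessor in `Fin m`. -/
def cprev {m : ℕ} (j : Fin m) : Fin m := ⟨(j.1 + m - 1) % m, Nat.mod_lt _ j.pos⟩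

/-- Cyclic successor in `Fin m`. -/
def cnext {m : ℕ} (j : Fin m) : Fin m := ⟨(j.1 + 1) % m, Nat.mod_lt _ j.pos⟩

lemma cprev_cnext {m : ℕ} (j : Fin m) : cprev (cnext j) = j := by
  have hm : 1 ≤ m := j.pos
  have h2 : j.1 < m := j.2
  apply Fin.ext
  show ((j.1 + 1) % m + m - 1) % m = j.1
  rw [show (j.1 + 1) % m + m - 1 = (j.1 + 1) % m + (m - 1) from by omega,
    Nat.mod_add_mod, show j.1 + 1 + (m - 1) = j.1 + m from by omega,
    Nat.add_mod_right, Nat.mod_eq_of_lt h2]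

lemma cnext_cprev {m : ℕ} (j : Fin m) : cnext (cprev j) = j := by
  have hm : 1 ≤ m := j.pos
  have h2 : j.1 < m := j.2
  apply Fin.ext
  show ((j.1 + m - 1) % m + 1) % m = j.1
  rw [Nat.mod_add_mod, show j.1 + m - 1 + 1 = j.1 + m from by omega,
    Nat.add_mod_right, Nat.mod_eq_of_lt h2]

lemma cnext_ne {m : ℕ} (hm : 2 ≤ m) (j : Fin m) : cnext j ≠ j := by
  intro h
  have := congrArg Fin.val h
  simp only [cnext] at this
  rcases Nat.lt_or_ge (j.1 + 1) m with h1 | h1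
  · rw [Nat.mod_eq_of_lt h1] at this; omega
  · have hj : j.1 < m := j.2
    have : (j.1 + 1) % m = j.1 := this
    have he : j.1 + 1 = m := by omega
    rw [he, Nat.mod_self] at this
    omega

theorem stmt_13 (K : ℕ) (hK : 2 ≤ K) (α : Fin K → Fin K → ℝ)
    (hα : ∀ i j, 0 ≤ α i j) (d : Fin K → ℝ) (hd : ∀ i, 0 ≤ d i)
    (m : ℕ) (hm : 2 ≤ m) (i : Fin m → Fin K) (hinj : Function.Injective i)
    (hpos : ∀ j : Fin m, 0 < d (i j))
    (hviol : ∑ j : Fin m, (α (i j) (i j) - α (i (cprev j)) (i j)) <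
      ∑ j : Fin m, d (i j)) :
    ¬ ∃ r : Fin K → ℝ, (∀ i, r i ≤ 0) ∧
      ∀ j : Fin m, d (i j) = α (i j) (i j) + r (i j) -
        max 0 (⨆ k : {k : Fin K // k ≠ i j}, (α (i j) k.1 + r k.1)) := by
  rintro ⟨r, hr0, hr⟩
  have hbij : Function.Bijective (cnext (m := m)) := by
    have hinj' : Function.Injective (cnext (m := m)) := by
      intro a b h
      have := congrArg cprev h
      rwa [cprev_cnext, cprev_cnext] at this
    exact Finite.injective_iff_bijective.mp hinj'
  -- key pointwise inequality
  have key : ∀ j : Fin m, d (i j) ≤ α (i j) (i j) + r (i j)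
      - (α (i j) (i (cnext j)) + r (i (cnext j))) := by
    intro j
    have hne : i (cnext j) ≠ i j := fun h => cnext_ne hm j (hinj h)
    have hbdd : BddAbove (Set.range fun k : {k : Fin K // k ≠ i j} =>
        α (i j) k.1 + r k.1) := Set.Finite.bddAbove (Set.finite_range _)
    have h1 : α (i j) (i (cnext j)) + r (i (cnext j)) ≤
        ⨆ k : {k : Fin K // k ≠ i j}, (α (i j) k.1 + r k.1) :=
      le_ciSup hbdd ⟨i (cnext j), hne⟩
    have h2 := le_max_right (0 : ℝ)
      (⨆ k : {k : Fin K // k ≠ i j}, (α (i j) k.1 + r k.1))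
    rw [hr j]
    linarith [le_trans h1 h2]
  have hsum : ∑ j : Fin m, d (i j) ≤
      ∑ j : Fin m, (α (i j) (i j) + r (i j)
        - (α (i j) (i (cnext j)) + r (i (cnext j)))) :=
    Finset.sum_le_sum fun j _ => key j
  have hrsum : ∑ j : Fin m, r (i (cnext j)) = ∑ j : Fin m, r (i j) :=
    Fintype.sum_bijective cnext hbij _ _ (fun j => rfl)
  have halpha : ∑ j : Fin m, α (i (cprev j)) (i j)
      = ∑ j : Fin m, α (i j) (i (cnext j)) := by
    refine (Fintype.sum_bijective cnext hbij _ _ (fun j => ?_)).symm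
    rw [cprev_cnext]
  simp only [Finset.sum_sub_distrib, Finset.sum_add_distrib] at hsum
  rw [Finset.sum_sub_distrib, halpha] at hviol
  linarith
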